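/- Let κ > 0. The family of Gaussian functions {x ↦ exp(−‖x − x₀‖²/(2κ²)) : x₀ ∈ ℝⁿ} has dense linear span over ℂ in L²(ℝⁿ, ℂ): for every f ∈ L²(ℝⁿ, ℂ) and every ε > 0 there exist p ≥ 1, points x₁, …, x_p ∈ ℝⁿ and coefficients a₁, …, a_p ∈ ℂ such that ‖f − ∑_{j=1}^p a_j exp(−‖· − x_j‖²/(2κ²))‖_{L²} < ε. -/

import Mathlib

open MeasureTheory Complex Real Finset Filter
open scoped Topology RealInnerProductSpace

noncomputable section GaussianDenseAux

variable {n : ℕ}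

private lemma coord_abs_le (x : EuclideanSpace ℝ (Fin n)) (j : Fin n) : |x j| ≤ ‖x‖ := by
  rw [EuclideanSpace.norm_eq, ← Real.sqrt_sq_eq_abs]
  apply Real.sqrt_le_sqrt
  have h := Finset.single_le_sum (f := fun i => ‖x i‖ ^ 2) (fun i _ => by positivity)
    (Finset.mem_univ j)
  simpa [Real.norm_eq_abs, sq_abs] using h

private lemma integrable_weight {b : ℝ} (hb : 0 < b) (c : ℝ) :
    Integrable (fun x : EuclideanSpace ℝ (Fin n) => rexp (-b * ‖x‖ ^ 2 + c * ‖x‖)) := by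
  have base := (GaussianFourier.integrable_cexp_neg_mul_sq_norm_add
      (V := EuclideanSpace ℝ (Fin n)) (b := (b/2 : ℂ)) (by simpa using half_pos hb)
      0 0).norm
  refine Integrable.mono' (base.const_mul (rexp (c ^ 2 / (2 * b)))) ?_ ?_
  · exact (Real.continuous_exp.comp (by fun_prop)).aestronglyMeasurable
  · filter_upwards with x
    have h1 : ‖cexp (-(b/2 : ℂ) * (‖x‖ : ℂ) ^ 2 +
        0 * ((inner ℝ (0 : EuclideanSpace ℝ (Fin n)) x : ℝ) : ℂ))‖ = rexp (-(b/2) * ‖x‖ ^ 2) := by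
      have harg : (-(b/2 : ℂ) * (‖x‖ : ℂ) ^ 2 +
          0 * ((inner ℝ (0 : EuclideanSpace ℝ (Fin n)) x : ℝ) : ℂ)) =
          ((-(b/2) * ‖x‖ ^ 2 : ℝ) : ℂ) := by push_cast; ring
      rw [harg, ← Complex.ofReal_exp, Complex.norm_real, Real.norm_eq_abs,
        _root_.abs_of_nonneg (Real.exp_nonneg _)]
    rw [Real.norm_eq_abs, _root_.abs_of_nonneg (Real.exp_nonneg _)]
    rw [h1, ← Real.exp_add]
    rw [Real.exp_le_exp]
    have h2b : (0:ℝ) < 2 * b := by positivity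
    have key : (-b * ‖x‖ ^ 2 + c * ‖x‖) - (-(b/2) * ‖x‖ ^ 2) ≤ c ^ 2 / (2 * b) := by
      rw [le_div_iff₀ h2b]
      nlinarith [sq_nonneg (c - b * ‖x‖)]
    linarith [key]

private lemma memL2_gauss {κ : ℝ} (hκ : 0 < κ) (x₀ : EuclideanSpace ℝ (Fin n)) :
    MemLp (fun x : EuclideanSpace ℝ (Fin n) =>
      Complex.exp (-(((‖x - x₀‖ ^ 2 / (2 * κ ^ 2) : ℝ)) : ℂ))) 2
      (volume : Measure (EuclideanSpace ℝ (Fin n))) := by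
  have hcont : Continuous (fun x : EuclideanSpace ℝ (Fin n) =>
      Complex.exp (-(((‖x - x₀‖ ^ 2 / (2 * κ ^ 2) : ℝ)) : ℂ))) := by fun_prop
  rw [memLp_two_iff_integrable_sq_norm hcont.aestronglyMeasurable]
  have hint : Integrable (fun x : EuclideanSpace ℝ (Fin n) =>
      rexp (-(1/κ^2) * ‖x - x₀‖ ^ 2 + 0 * ‖x - x₀‖)) := by
    exact (integrable_weight (by positivity) 0).comp_sub_right x₀
  refine hint.congr ?_
  filter_upwards with x
  rw [Complex.norm_exp, ← Real.exp_nat_mul]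
  congr 1
  simp only [neg_re, ofReal_re]
  push_cast
  field_simp
  ring

private lemma integrable_L2_mul_real {u v : EuclideanSpace ℝ (Fin n) → ℝ}
    (hu : MemLp u 2 (volume : Measure (EuclideanSpace ℝ (Fin n))))
    (hv : MemLp v 2 (volume : Measure (EuclideanSpace ℝ (Fin n)))) :
    Integrable (fun x => u x * v x) (volume : Measure (EuclideanSpace ℝ (Fin n))) := by
  have h := MeasureTheory.L2.integrable_inner (𝕜 := ℝ) (hu.toLp u) (hv.toLp v)
  refine h.congr ?_
  filter_upwards [hu.coeFn_toLp, hv.coeFn_toLp] with x h1 h2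
  rw [h1, h2]
  simp [real_inner_comm, mul_comm]

section Core

variable {g : EuclideanSpace ℝ (Fin n) → ℂ}

private lemma norm_mul_cexp_sum (g : EuclideanSpace ℝ (Fin n) → ℂ) (ξ : Fin n → ℂ)
    (x : EuclideanSpace ℝ (Fin n)) :
    ‖g x * cexp (∑ j, ξ j * (x j : ℂ))‖ ≤ ‖g x‖ * rexp ((∑ j, ‖ξ j‖) * ‖x‖) := by
  rw [norm_mul, Complex.norm_exp]
  refine mul_le_mul_of_nonneg_left ?_ (norm_nonneg _)
  rw [Real.exp_le_exp, Complex.re_sum, Finset.sum_mul]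
  refine Finset.sum_le_sum fun j _ => ?_
  have h1 : (ξ j * (x j : ℂ)).re = (ξ j).re * x j := by simp [Complex.mul_re]
  rw [h1]
  calc (ξ j).re * x j ≤ |(ξ j).re * x j| := le_abs_self _
    _ = |(ξ j).re| * |x j| := abs_mul _ _
    _ ≤ ‖ξ j‖ * ‖x‖ := by
        refine mul_le_mul ?_ (coord_abs_le x j) (abs_nonneg _) (norm_nonneg _)
        exact Complex.abs_re_le_norm _

private lemma cont_cexp_sum (ξ : Fin n → ℂ) :
    Continuous fun x : EuclideanSpace ℝ (Fin n) => cexp (∑ j, ξ j * (x j : ℂ)) :=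
  Complex.continuous_exp.comp (continuous_finset_sum _ fun j _ =>
    continuous_const.mul (Complex.continuous_ofReal.comp (PiLp.continuous_apply 2 _ j)))

private lemma integrable_phi (hg_m : AEStronglyMeasurable g (volume : Measure (EuclideanSpace ℝ (Fin n))))
    (hg : ∀ c : ℝ, Integrable (fun x : EuclideanSpace ℝ (Fin n) => ‖g x‖ * rexp (c * ‖x‖)) volume)
    (ξ : Fin n → ℂ) :
    Integrable (fun x : EuclideanSpace ℝ (Fin n) => g x * cexp (∑ j, ξ j * (x j : ℂ))) volume :=
  (hg (∑ j, ‖ξ j‖)).mono' (hg_m.mul (cont_cexp_sum ξ).aestronglyMeasurable)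
    (Eventually.of_forall (norm_mul_cexp_sum g ξ))

private lemma entire_phi (hg_m : AEStronglyMeasurable g (volume : Measure (EuclideanSpace ℝ (Fin n))))
    (hg : ∀ c : ℝ, Integrable (fun x : EuclideanSpace ℝ (Fin n) => ‖g x‖ * rexp (c * ‖x‖)) volume)
    (k : Fin n) (ξ : Fin n → ℂ) :
    Differentiable ℂ fun z : ℂ =>
      ∫ x : EuclideanSpace ℝ (Fin n), g x * cexp (∑ j, Function.update ξ k z j * (x j : ℂ)) := by
  set G : EuclideanSpace ℝ (Fin n) → ℂ :=
    fun x => g x * cexp (∑ j ∈ Finset.univ.erase k, ξ j * (x j : ℂ)) with hG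
  have hsum : ∀ (z : ℂ) (x : EuclideanSpace ℝ (Fin n)),
      (∑ j, Function.update ξ k z j * (x j : ℂ)) =
        z * (x k : ℂ) + ∑ j ∈ Finset.univ.erase k, ξ j * (x j : ℂ) := by
    intro z x
    rw [← Finset.add_sum_erase _ _ (Finset.mem_univ k)]
    congr 1
    · rw [Function.update_self]
    · refine Finset.sum_congr rfl fun j hj => ?_
      rw [Function.update_of_ne (Finset.ne_of_mem_erase hj)]
  have hrepr : ∀ z : ℂ, (∫ x : EuclideanSpace ℝ (Fin n),
      g x * cexp (∑ j, Function.update ξ k z j * (x j : ℂ))) =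
      ∫ x : EuclideanSpace ℝ (Fin n), G x * cexp (z * (x k : ℂ)) := by
    intro z
    refine integral_congr_ae (Eventually.of_forall fun x => ?_)
    show g x * cexp (∑ j, Function.update ξ k z j * (x j : ℂ)) = G x * cexp (z * (x k : ℂ))
    rw [hsum z x, Complex.exp_add, hG]
    ring
  set C₀ : ℝ := ∑ j ∈ Finset.univ.erase k, ‖ξ j‖ with hC₀
  have hC₀nn : 0 ≤ C₀ := Finset.sum_nonneg fun j _ => norm_nonneg _
  have hGnorm : ∀ x : EuclideanSpace ℝ (Fin n), ‖G x‖ ≤ ‖g x‖ * rexp (C₀ * ‖x‖) := by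
    intro x
    rw [hG]
    calc ‖g x * cexp (∑ j ∈ Finset.univ.erase k, ξ j * (x j : ℂ))‖
        = ‖g x‖ * rexp ((∑ j ∈ Finset.univ.erase k, ξ j * (x j : ℂ)).re) := by
          rw [norm_mul, Complex.norm_exp]
      _ ≤ ‖g x‖ * rexp (C₀ * ‖x‖) := by
          refine mul_le_mul_of_nonneg_left ?_ (norm_nonneg _)
          rw [Real.exp_le_exp, Complex.re_sum, hC₀, Finset.sum_mul]
          refine Finset.sum_le_sum fun j _ => ?_
          have h1 : (ξ j * (x j : ℂ)).re = (ξ j).re * x j := by simp [Complex.mul_re]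
          rw [h1]
          calc (ξ j).re * x j ≤ |(ξ j).re * x j| := le_abs_self _
            _ = |(ξ j).re| * |x j| := abs_mul _ _
            _ ≤ ‖ξ j‖ * ‖x‖ :=
                mul_le_mul (Complex.abs_re_le_norm _) (coord_abs_le x j) (abs_nonneg _)
                  (norm_nonneg _)
  have hGmeas : AEStronglyMeasurable G (volume : Measure (EuclideanSpace ℝ (Fin n))) := by
    refine hg_m.mul (Continuous.aestronglyMeasurable ?_)
    exact Complex.continuous_exp.comp (continuous_finset_sum _ fun j _ =>
      continuous_const.mul (Complex.continuous_ofReal.comp (PiLp.continuous_apply 2 _ j)))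
  have hcontk : ∀ z : ℂ, Continuous fun x : EuclideanSpace ℝ (Fin n) => cexp (z * (x k : ℂ)) :=
    fun z => Complex.continuous_exp.comp
      (continuous_const.mul (Complex.continuous_ofReal.comp (PiLp.continuous_apply 2 _ k)))
  have hdiff : ∀ z₀ : ℂ, HasDerivAt
      (fun z : ℂ => ∫ x : EuclideanSpace ℝ (Fin n), G x * cexp (z * (x k : ℂ)))
      (∫ x : EuclideanSpace ℝ (Fin n), G x * (cexp (z₀ * (x k : ℂ)) * (x k : ℂ))) z₀ := by
    intro z₀
    have hFint : Integrable (fun x : EuclideanSpace ℝ (Fin n) => G x * cexp (z₀ * (x k : ℂ)))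
        volume := by
      refine (integrable_phi hg_m hg (Function.update ξ k z₀)).congr ?_
      filter_upwards with x
      show g x * cexp (∑ j, Function.update ξ k z₀ j * (x j : ℂ)) = G x * cexp (z₀ * (x k : ℂ))
      rw [hsum z₀ x, Complex.exp_add, hG]
      ring
    have hbound : Integrable (fun x : EuclideanSpace ℝ (Fin n) =>
        ‖g x‖ * rexp ((C₀ + ‖z₀‖ + 2) * ‖x‖)) volume := hg _
    have := hasDerivAt_integral_of_dominated_loc_of_deriv_le (s := Metric.ball z₀ 1) (μ := volume)
      (F := fun z (x : EuclideanSpace ℝ (Fin n)) => G x * cexp (z * (x k : ℂ)))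
      (F' := fun z (x : EuclideanSpace ℝ (Fin n)) => G x * (cexp (z * (x k : ℂ)) * (x k : ℂ)))
      (x₀ := z₀) (Metric.ball_mem_nhds z₀ one_pos)
      (Eventually.of_forall fun z => hGmeas.mul (hcontk z).aestronglyMeasurable)
      hFint
      (hGmeas.mul (((hcontk z₀).mul
        (Complex.continuous_ofReal.comp (PiLp.continuous_apply 2 _ k))).aestronglyMeasurable))
      ?_ hbound ?_
    · exact this.2
    · filter_upwards with x
      intro z hz
      have hzn : ‖z‖ ≤ ‖z₀‖ + 1 := by
        have := mem_ball_iff_norm.mp hz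
        calc ‖z‖ = ‖z₀ + (z - z₀)‖ := by ring_nf
          _ ≤ ‖z₀‖ + ‖z - z₀‖ := norm_add_le _ _
          _ ≤ ‖z₀‖ + 1 := by linarith
      have hre : (z * (x k : ℂ)).re ≤ (‖z₀‖ + 1) * ‖x‖ := by
        have h1 : (z * (x k : ℂ)).re = z.re * x k := by simp [Complex.mul_re]
        rw [h1]
        calc z.re * x k ≤ |z.re * x k| := le_abs_self _
          _ = |z.re| * |x k| := abs_mul _ _
          _ ≤ (‖z₀‖ + 1) * ‖x‖ := by
              refine mul_le_mul ?_ (coord_abs_le x k) (abs_nonneg _) (by positivity)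
              exact (Complex.abs_re_le_norm _).trans hzn
      have hnorm3 : ∀ (a w : ℂ) (r : ℝ), ‖a * (cexp w * (r : ℂ))‖ = ‖a‖ * (rexp w.re * |r|) := by
        intro a w r
        rw [norm_mul, norm_mul, Complex.norm_exp,
          Complex.norm_real, Real.norm_eq_abs]
      calc ‖G x * (cexp (z * (x k : ℂ)) * (x k : ℂ))‖
          = ‖G x‖ * (rexp ((z * (x k : ℂ)).re) * |x k|) := hnorm3 (G x) _ (x k)
        _ ≤ (‖g x‖ * rexp (C₀ * ‖x‖)) * (rexp ((‖z₀‖ + 1) * ‖x‖) * rexp ‖x‖) := by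
            refine mul_le_mul (hGnorm x) ?_ (by positivity) (by positivity)
            refine mul_le_mul (by rw [Real.exp_le_exp]; exact hre) ?_ (abs_nonneg _)
              (Real.exp_nonneg _)
            exact (coord_abs_le x k).trans
              (by linarith [Real.add_one_le_exp ‖x‖])
        _ = ‖g x‖ * rexp ((C₀ + ‖z₀‖ + 2) * ‖x‖) := by
            rw [← Real.exp_add, mul_assoc, ← Real.exp_add]
            congr 2
            ring
    · filter_upwards with x
      intro z hz
      have hd : HasDerivAt (fun w : ℂ => cexp (w * (x k : ℂ)))
          (cexp (z * (x k : ℂ)) * (x k : ℂ)) z := by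
        have := ((hasDerivAt_id z).mul_const ((x k : ℝ) : ℂ)).cexp
        simpa using this
      exact hd.const_mul (G x)
  have hDiff : Differentiable ℂ
      (fun z : ℂ => ∫ x : EuclideanSpace ℝ (Fin n), G x * cexp (z * (x k : ℂ))) :=
    fun z₀ => (hdiff z₀).differentiableAt
  have heq : (fun z : ℂ => ∫ x : EuclideanSpace ℝ (Fin n),
      g x * cexp (∑ j, Function.update ξ k z j * (x j : ℂ))) =
      fun z : ℂ => ∫ x : EuclideanSpace ℝ (Fin n), G x * cexp (z * (x k : ℂ)) := funext hrepr
  rw [heq]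
  exact hDiff

private lemma entire_zero_of_real {F : ℂ → ℂ} (hF : Differentiable ℂ F)
    (h0 : ∀ r : ℝ, F (r : ℂ) = 0) (z : ℂ) : F z = 0 := by
  have ha : AnalyticOnNhd ℂ F Set.univ :=
    hF.differentiableOn.analyticOnNhd isOpen_univ
  have seq : Tendsto (fun m : ℕ => ((((m : ℝ) + 1)⁻¹ : ℝ) : ℂ)) atTop (𝓝[≠] (0 : ℂ)) := by
    apply tendsto_nhdsWithin_of_tendsto_nhds_of_eventually_within
    · have h1 : Tendsto (fun m : ℕ => ((m : ℝ) + 1)⁻¹) atTop (𝓝 0) :=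
        tendsto_inv_atTop_zero.comp (tendsto_atTop_add_const_right _ 1 tendsto_natCast_atTop_atTop)
      have := (Complex.continuous_ofReal.tendsto 0).comp h1
      simpa [Function.comp_def] using this
    · filter_upwards with m
      simp only [Set.mem_compl_iff, Set.mem_singleton_iff]
      exact Complex.ofReal_ne_zero.mpr (by positivity)
  have freq : ∃ᶠ w in 𝓝[≠] (0 : ℂ), F w = 0 :=
    seq.frequently (Frequently.of_forall fun m => h0 _)
  have := ha.eqOn_zero_of_preconnected_of_frequently_eq_zero isPreconnected_univ
    (Set.mem_univ (0 : ℂ)) freq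
  exact this (Set.mem_univ z)

private lemma phi_zero_of_real
    (hg_m : AEStronglyMeasurable g (volume : Measure (EuclideanSpace ℝ (Fin n))))
    (hg : ∀ c : ℝ, Integrable (fun x : EuclideanSpace ℝ (Fin n) => ‖g x‖ * rexp (c * ‖x‖)) volume)
    (h0 : ∀ ξ : Fin n → ℝ,
      ∫ x : EuclideanSpace ℝ (Fin n), g x * cexp (∑ j, (ξ j : ℂ) * (x j : ℂ)) = 0) :
    ∀ ξ : Fin n → ℂ, ∫ x : EuclideanSpace ℝ (Fin n), g x * cexp (∑ j, ξ j * (x j : ℂ)) = 0 := by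
  suffices Hk : ∀ k : ℕ, ∀ ξ : Fin n → ℂ, (∀ j : Fin n, k ≤ (j : ℕ) → (ξ j).im = 0) →
      ∫ x : EuclideanSpace ℝ (Fin n), g x * cexp (∑ j, ξ j * (x j : ℂ)) = 0 by
    intro ξ
    exact Hk n ξ (fun j hj => absurd hj (not_le.mpr j.isLt))
  intro k
  induction k with
  | zero =>
    intro ξ hξ
    have hre : ξ = fun j => (((ξ j).re : ℝ) : ℂ) := by
      funext j
      exact Complex.ext rfl (by simpa using hξ j (Nat.zero_le _))
    rw [hre]
    exact h0 fun j => (ξ j).re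
  | succ k ih =>
    intro ξ hξ
    by_cases hk : k < n
    · set k' : Fin n := ⟨k, hk⟩ with hk'
      have hupd : ∀ r : ℝ, (∫ x : EuclideanSpace ℝ (Fin n),
          g x * cexp (∑ j, Function.update ξ k' (r : ℂ) j * (x j : ℂ))) = 0 := by
        intro r
        refine ih _ (fun j hj => ?_)
        rcases eq_or_ne j k' with h | h
        · subst h; rw [Function.update_self]; simp
        · rw [Function.update_of_ne h]
          refine hξ j ?_
          have hjk : (j : ℕ) ≠ k := by
            intro hc
            exact h (Fin.ext (by simp [hk', hc]))
          omega
      have hF := entire_phi hg_m hg k' ξ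
      have hz := entire_zero_of_real hF hupd (ξ k')
      simpa [Function.update_eq_self] using hz
    · refine ih ξ (fun j hj => ?_)
      have := j.isLt
      omega

private lemma phi_form (t x : EuclideanSpace ℝ (Fin n)) :
    ((-2 * π * (inner ℝ t x : ℝ) : ℝ) : ℂ) * I =
      ∑ j, ((-2 * π * t j : ℝ) : ℂ) * I * ((x j : ℝ) : ℂ) := by
  have : (inner ℝ t x : ℝ) = ∑ j, t j * x j := by
    simp [PiLp.inner_apply, RCLike.inner_apply, mul_comm]
  rw [this]
  push_cast
  rw [Finset.mul_sum, Finset.sum_mul]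
  · refine Finset.sum_congr rfl fun j _ => ?_
    ring

private lemma exists_schwartz_of_contDiff (φ : EuclideanSpace ℝ (Fin n) → ℝ)
    (hφ : ContDiff ℝ ((⊤ : ℕ∞) : WithTop ℕ∞) φ) (hc : HasCompactSupport φ) :
    ∃ Φ : SchwartzMap (EuclideanSpace ℝ (Fin n)) ℂ, ⇑Φ = fun x => ((φ x : ℝ) : ℂ) := by
  have hsm : ContDiff ℝ ((⊤ : ℕ∞) : WithTop ℕ∞)
      (fun x : EuclideanSpace ℝ (Fin n) => ((φ x : ℝ) : ℂ)) :=
    Complex.ofRealCLM.contDiff.comp hφ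
  have hcs : HasCompactSupport (fun x : EuclideanSpace ℝ (Fin n) => ((φ x : ℝ) : ℂ)) :=
    hc.comp_left (g := fun r : ℝ => (r : ℂ)) Complex.ofReal_zero
  refine ⟨⟨fun x => ((φ x : ℝ) : ℂ), hsm, ?_⟩, rfl⟩
  intro k m
  have hcont : Continuous fun x : EuclideanSpace ℝ (Fin n) =>
      ‖x‖ ^ k * ‖iteratedFDeriv ℝ m (fun x : EuclideanSpace ℝ (Fin n) => ((φ x : ℝ) : ℂ)) x‖ :=
    ((continuous_norm.pow k)).mul (hsm.continuous_iteratedFDeriv (by exact_mod_cast le_top)).norm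
  have hcs2 : HasCompactSupport fun x : EuclideanSpace ℝ (Fin n) =>
      ‖x‖ ^ k * ‖iteratedFDeriv ℝ m (fun x : EuclideanSpace ℝ (Fin n) => ((φ x : ℝ) : ℂ)) x‖ :=
    ((hcs.iteratedFDeriv m).norm).mul_left
  obtain ⟨C, hC⟩ := hcont.bounded_above_of_compact_support hcs2
  refine ⟨C, fun x => ?_⟩
  have h := hC x
  rwa [Real.norm_eq_abs, _root_.abs_of_nonneg (by positivity)] at h

private lemma ae_zero_of_phi
    (hg_m : AEStronglyMeasurable g (volume : Measure (EuclideanSpace ℝ (Fin n))))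
    (hg : ∀ c : ℝ, Integrable (fun x : EuclideanSpace ℝ (Fin n) => ‖g x‖ * rexp (c * ‖x‖)) volume)
    (hphi : ∀ ξ : Fin n → ℂ,
      ∫ x : EuclideanSpace ℝ (Fin n), g x * cexp (∑ j, ξ j * (x j : ℂ)) = 0) :
    g =ᵐ[(volume : Measure (EuclideanSpace ℝ (Fin n)))] 0 := by
  have hgint : Integrable g (volume : Measure (EuclideanSpace ℝ (Fin n))) := by
    refine (hg 0).mono' hg_m (Eventually.of_forall fun x => ?_)
    simp
  apply ae_eq_zero_of_integral_contDiff_smul_eq_zero hgint.locallyIntegrable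
  intro φ hφ hφc
  obtain ⟨Φ, hΦ⟩ := exists_schwartz_of_contDiff φ hφ hφc
  set ψ : SchwartzMap (EuclideanSpace ℝ (Fin n)) ℂ :=
    (FourierTransform.fourierCLE ℂ (SchwartzMap (EuclideanSpace ℝ (Fin n)) ℂ)).symm Φ with hψdef
  have hFT : FourierTransform.fourier (⇑ψ) = ⇑Φ := by
    have h3 : FourierTransform.fourierCLE ℂ (SchwartzMap (EuclideanSpace ℝ (Fin n)) ℂ) ψ = Φ :=
      (FourierTransform.fourierCLE ℂ (SchwartzMap (EuclideanSpace ℝ (Fin n)) ℂ)).apply_symm_apply Φ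
    rw [← h3, FourierTransform.fourierCLE_apply]
    exact (SchwartzMap.fourier_coe ψ).symm
  have huncint : Integrable (Function.uncurry fun (x : EuclideanSpace ℝ (Fin n))
      (t : EuclideanSpace ℝ (Fin n)) =>
        cexp (((-2 * π * (inner ℝ t x : ℝ) : ℝ) : ℂ) * I) * ψ t * g x)
      ((volume : Measure (EuclideanSpace ℝ (Fin n))).prod volume) := by
    have base : Integrable (fun p : EuclideanSpace ℝ (Fin n) × EuclideanSpace ℝ (Fin n) =>
        ‖g p.1‖ * ‖ψ p.2‖) (volume.prod volume) :=
      hgint.norm.mul_prod (ψ.integrable (μ := volume)).norm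
    have hin : Continuous fun p : EuclideanSpace ℝ (Fin n) × EuclideanSpace ℝ (Fin n) =>
        (inner ℝ p.2 p.1 : ℝ) :=
      continuous_inner.comp (continuous_snd.prodMk continuous_fst)
    have hker : Continuous fun p : EuclideanSpace ℝ (Fin n) × EuclideanSpace ℝ (Fin n) =>
        cexp (((-2 * π * (inner ℝ p.2 p.1 : ℝ) : ℝ) : ℂ) * I) :=
      Complex.continuous_exp.comp
        ((Complex.continuous_ofReal.comp (continuous_const.mul hin)).mul continuous_const)
    have haesm : AEStronglyMeasurable
        (Function.uncurry fun (x t : EuclideanSpace ℝ (Fin n)) =>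
          cexp (((-2 * π * (inner ℝ t x : ℝ) : ℝ) : ℂ) * I) * ψ t * g x)
        (volume.prod volume) := by
      refine ((hker.mul (ψ.continuous.comp continuous_snd)).aestronglyMeasurable).mul ?_
      exact hg_m.comp_quasiMeasurePreserving Measure.quasiMeasurePreserving_fst
    refine base.mono' haesm (Eventually.of_forall fun p => le_of_eq ?_)
    have h1 : ‖cexp (((-2 * π * (inner ℝ p.2 p.1 : ℝ) : ℝ) : ℂ) * I)‖ = 1 := by
      rw [Complex.norm_exp]
      simp
    calc ‖Function.uncurry (fun (x t : EuclideanSpace ℝ (Fin n)) =>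
          cexp (((-2 * π * (inner ℝ t x : ℝ) : ℝ) : ℂ) * I) * ψ t * g x) p‖
        = ‖cexp (((-2 * π * (inner ℝ p.2 p.1 : ℝ) : ℝ) : ℂ) * I)‖ * ‖ψ p.2‖ * ‖g p.1‖ := by
          rw [Function.uncurry]
          rw [norm_mul, norm_mul]
      _ = ‖g p.1‖ * ‖ψ p.2‖ := by rw [h1]; ring
  have key : (∫ x : EuclideanSpace ℝ (Fin n), φ x • g x) = 0 := by
    calc (∫ x : EuclideanSpace ℝ (Fin n), φ x • g x)
        = ∫ x : EuclideanSpace ℝ (Fin n), (FourierTransform.fourier (⇑ψ) x) * g x := by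
          refine integral_congr_ae (Eventually.of_forall fun x => ?_)
          simp only [hFT, hΦ, Complex.real_smul]
      _ = ∫ x : EuclideanSpace ℝ (Fin n),
            (∫ t : EuclideanSpace ℝ (Fin n),
              cexp (((-2 * π * (inner ℝ t x : ℝ) : ℝ) : ℂ) * I) * ψ t) * g x := by
          refine integral_congr_ae (Eventually.of_forall fun x => ?_)
          show FourierTransform.fourier (⇑ψ) x * g x = _
          rw [Real.fourier_eq']
          simp only [smul_eq_mul]
      _ = ∫ x : EuclideanSpace ℝ (Fin n), ∫ t : EuclideanSpace ℝ (Fin n),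
            cexp (((-2 * π * (inner ℝ t x : ℝ) : ℝ) : ℂ) * I) * ψ t * g x := by
          refine integral_congr_ae (Eventually.of_forall fun x => ?_)
          exact (integral_mul_const (g x) _).symm
      _ = ∫ t : EuclideanSpace ℝ (Fin n), ∫ x : EuclideanSpace ℝ (Fin n),
            cexp (((-2 * π * (inner ℝ t x : ℝ) : ℝ) : ℂ) * I) * ψ t * g x :=
          integral_integral_swap huncint
      _ = ∫ t : EuclideanSpace ℝ (Fin n), ψ t *
            ∫ x : EuclideanSpace ℝ (Fin n),
              g x * cexp (∑ j, ((-2 * π * t j : ℝ) : ℂ) * I * (x j : ℂ)) := by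
          refine integral_congr_ae (Eventually.of_forall fun t => ?_)
          show (∫ x : EuclideanSpace ℝ (Fin n),
              cexp (((-2 * π * (inner ℝ t x : ℝ) : ℝ) : ℂ) * I) * ψ t * g x) =
            ψ t * ∫ x : EuclideanSpace ℝ (Fin n),
              g x * cexp (∑ j, ((-2 * π * t j : ℝ) : ℂ) * I * (x j : ℂ))
          rw [← integral_const_mul]
          refine integral_congr_ae (Eventually.of_forall fun x => ?_)
          show cexp (((-2 * π * (inner ℝ t x : ℝ) : ℝ) : ℂ) * I) * ψ t * g x = _
          rw [phi_form t x]
          ring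
      _ = 0 := by
          refine integral_eq_zero_of_ae (Eventually.of_forall fun t => ?_)
          show ψ t * (∫ x : EuclideanSpace ℝ (Fin n),
              g x * cexp (∑ j, ((-2 * π * t j : ℝ) : ℂ) * I * (x j : ℂ))) = (0 : ℂ)
          rw [hphi (fun j => ((-2 * π * t j : ℝ) : ℂ) * I), mul_zero]
  exact key

end Core

private lemma coeFn_sum_smul_toLp {m : ℕ} (c : Fin m → ℂ)
    (u : Fin m → EuclideanSpace ℝ (Fin n) → ℂ)
    (hu : ∀ i, MemLp (u i) 2 (volume : Measure (EuclideanSpace ℝ (Fin n))))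
    (s : Finset (Fin m)) :
    ⇑(∑ i ∈ s, c i • (hu i).toLp (u i)) =ᵐ[(volume : Measure (EuclideanSpace ℝ (Fin n)))]
      fun y => ∑ i ∈ s, c i * u i y := by
  classical
  induction s using Finset.induction_on with
  | empty =>
    simp only [Finset.sum_empty]
    filter_upwards [MeasureTheory.Lp.coeFn_zero (E := ℂ) (p := 2)
      (μ := (volume : Measure (EuclideanSpace ℝ (Fin n))))] with y hy
    simpa using hy
  | @insert i0 s hni ih =>
    rw [Finset.sum_insert hni]
    filter_upwards [MeasureTheory.Lp.coeFn_add (c i0 • (hu i0).toLp (u i0))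
        (∑ i ∈ s, c i • (hu i).toLp (u i)),
      MeasureTheory.Lp.coeFn_smul (c i0) ((hu i0).toLp (u i0)),
      (hu i0).coeFn_toLp, ih] with y h1 h2 h3 h4
    rw [h1, Pi.add_apply, h2, Pi.smul_apply, h3, h4, Finset.sum_insert hni, smul_eq_mul]

end GaussianDenseAux

/-- For any `κ > 0`, the family of Gaussians `x ↦ exp(-‖x - x₀‖²/(2κ²))`,
`x₀ ∈ ℝⁿ`, has dense linear span over `ℂ` in `L²(ℝⁿ, ℂ)`: every square-integrable `f` can be
approximated in the `L²` norm, to any accuracy `ε > 0`, by finite complex linear combinations of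
such Gaussians. -/
theorem gaussian_kernel_L2_universal
    {n : ℕ} (κ : ℝ) (hκ : 0 < κ)
    (f : EuclideanSpace ℝ (Fin n) → ℂ)
    (hf : MemLp f 2 (volume : Measure (EuclideanSpace ℝ (Fin n)))) :
    ∀ ε : ℝ, 0 < ε →
      ∃ (p : ℕ) (_ : 1 ≤ p) (x : Fin p → EuclideanSpace ℝ (Fin n)) (a : Fin p → ℂ),
        eLpNorm (fun y : EuclideanSpace ℝ (Fin n) =>
            f y - ∑ j : Fin p, a j *
              Complex.exp (-(((‖y - x j‖ ^ 2 / (2 * κ ^ 2) : ℝ)) : ℂ))) 2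
          (volume : Measure (EuclideanSpace ℝ (Fin n))) < ENNReal.ofReal ε := by
  intro ε hε
  classical
  have hκ2 : κ ^ 2 ≠ 0 := by positivity
  set G : EuclideanSpace ℝ (Fin n) → EuclideanSpace ℝ (Fin n) → ℂ :=
    fun x₀ x => Complex.exp (-(((‖x - x₀‖ ^ 2 / (2 * κ ^ 2) : ℝ)) : ℂ)) with hGdef
  have hGmem : ∀ x₀, MemLp (G x₀) 2 (volume : Measure (EuclideanSpace ℝ (Fin n))) :=
    fun x₀ => memL2_gauss hκ x₀
  have hGconj : ∀ x₀ x, (starRingEnd ℂ) (G x₀ x) = G x₀ x := by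
    intro x₀ x
    show (starRingEnd ℂ) (cexp (-(((‖x - x₀‖ ^ 2 / (2 * κ ^ 2) : ℝ)) : ℂ))) =
      cexp (-(((‖x - x₀‖ ^ 2 / (2 * κ ^ 2) : ℝ)) : ℂ))
    rw [← Complex.ofReal_neg, ← Complex.ofReal_exp, Complex.conj_ofReal]
  set S : Submodule ℂ (Lp ℂ 2 (volume : Measure (EuclideanSpace ℝ (Fin n)))) :=
    Submodule.span ℂ (Set.range fun x₀ => (hGmem x₀).toLp (G x₀)) with hSdef
  have hdense : S.topologicalClosure = ⊤ := by
    rw [Submodule.topologicalClosure_eq_top_iff, Submodule.eq_bot_iff]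
    intro h hmem
    have horth : ∀ x₀ : EuclideanSpace ℝ (Fin n),
        (∫ x : EuclideanSpace ℝ (Fin n), G x₀ x * (⇑h) x) = 0 := by
      intro x₀
      have hm := (Submodule.mem_orthogonal S h).mp hmem ((hGmem x₀).toLp (G x₀))
        (Submodule.subset_span ⟨x₀, rfl⟩)
      rw [MeasureTheory.L2.inner_def] at hm
      rw [← hm]
      refine integral_congr_ae ?_
      filter_upwards [(hGmem x₀).coeFn_toLp] with x hx
      rw [hx, RCLike.inner_apply, hGconj, mul_comm]
    set gfun : EuclideanSpace ℝ (Fin n) → ℂ :=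
      fun x => (⇑h) x * cexp (((-(‖x‖ ^ 2 / (2 * κ ^ 2)) : ℝ) : ℂ)) with hgfun
    have hgm : AEStronglyMeasurable gfun (volume : Measure (EuclideanSpace ℝ (Fin n))) := by
      refine (MeasureTheory.Lp.aestronglyMeasurable h).mul
        (Continuous.aestronglyMeasurable ?_)
      fun_prop
    have hgc : ∀ c : ℝ, Integrable
        (fun x : EuclideanSpace ℝ (Fin n) => ‖gfun x‖ * rexp (c * ‖x‖)) volume := by
      intro c
      have hu : MemLp (fun x : EuclideanSpace ℝ (Fin n) => ‖(⇑h) x‖) 2 volume :=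
        (MeasureTheory.Lp.memLp h).norm
      have hv : MemLp (fun x : EuclideanSpace ℝ (Fin n) =>
          rexp (-(1 / (2 * κ ^ 2)) * ‖x‖ ^ 2 + c * ‖x‖)) 2 volume := by
        have hvc : Continuous (fun x : EuclideanSpace ℝ (Fin n) =>
            rexp (-(1 / (2 * κ ^ 2)) * ‖x‖ ^ 2 + c * ‖x‖)) := by fun_prop
        rw [memLp_two_iff_integrable_sq_norm hvc.aestronglyMeasurable]
        refine (integrable_weight (b := 1 / κ ^ 2) (by positivity) (2 * c)).congr
          (Eventually.of_forall fun x => ?_)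
        show rexp (-(1 / κ ^ 2) * ‖x‖ ^ 2 + 2 * c * ‖x‖) =
          ‖rexp (-(1 / (2 * κ ^ 2)) * ‖x‖ ^ 2 + c * ‖x‖)‖ ^ 2
        rw [Real.norm_eq_abs, _root_.sq_abs, ← Real.exp_nat_mul]
        congr 1
        push_cast
        field_simp
        try ring
      refine (integrable_L2_mul_real hu hv).congr (Eventually.of_forall fun x => ?_)
      show ‖(⇑h) x‖ * rexp (-(1 / (2 * κ ^ 2)) * ‖x‖ ^ 2 + c * ‖x‖) =
        ‖(⇑h) x * cexp (((-(‖x‖ ^ 2 / (2 * κ ^ 2)) : ℝ) : ℂ))‖ * rexp (c * ‖x‖)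
      rw [norm_mul, ← Complex.ofReal_exp, Complex.norm_real, Real.norm_eq_abs,
        _root_.abs_of_nonneg (Real.exp_nonneg _), mul_assoc, ← Real.exp_add]
      congr 2
      field_simp
      try ring
    have h0 : ∀ ξ : Fin n → ℝ, ∫ x : EuclideanSpace ℝ (Fin n),
        gfun x * cexp (∑ j, (ξ j : ℂ) * (x j : ℂ)) = 0 := by
      intro ξ
      set x₀ : EuclideanSpace ℝ (Fin n) := WithLp.toLp 2 (fun j => κ ^ 2 * ξ j) with hx₀
      have hinner : (inner ℝ x₀ : EuclideanSpace ℝ (Fin n) → ℝ) = fun x => κ ^ 2 * ∑ j, ξ j * x j := by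
        funext x
        rw [PiLp.inner_apply]
        rw [Finset.mul_sum]
        refine Finset.sum_congr rfl fun j _ => ?_
        simp only [RCLike.inner_apply, conj_trivial]
        show x j * x₀ j = κ ^ 2 * (ξ j * x j)
        rw [hx₀]
        show x j * (κ ^ 2 * ξ j) = _
        ring
      have hArg : ∀ x : EuclideanSpace ℝ (Fin n),
          (-(((‖x - x₀‖ ^ 2 / (2 * κ ^ 2) : ℝ)) : ℂ)) =
            ((-(‖x‖ ^ 2 / (2 * κ ^ 2)) : ℝ) : ℂ) + ((∑ j, ξ j * x j : ℝ) : ℂ) +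
              ((-(‖x₀‖ ^ 2 / (2 * κ ^ 2)) : ℝ) : ℂ) := by
        intro x
        rw [← Complex.ofReal_neg, ← Complex.ofReal_add, ← Complex.ofReal_add]
        congr 1
        have hns : ‖x - x₀‖ ^ 2 = ‖x‖ ^ 2 - 2 * (inner ℝ x x₀ : ℝ) + ‖x₀‖ ^ 2 :=
          norm_sub_sq_real x x₀
        have hin : (inner ℝ x x₀ : ℝ) = κ ^ 2 * ∑ j, ξ j * x j := by
          rw [real_inner_comm]
          exact congrFun hinner x
        rw [hns, hin]
        field_simp
        ring
      have hsplit : ∀ x : EuclideanSpace ℝ (Fin n), G x₀ x * (⇑h) x =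
          cexp (((-(‖x₀‖ ^ 2 / (2 * κ ^ 2)) : ℝ) : ℂ)) *
            (gfun x * cexp (∑ j, (ξ j : ℂ) * (x j : ℂ))) := by
        intro x
        have hcoe : ((∑ j, ξ j * x j : ℝ) : ℂ) = ∑ j, (ξ j : ℂ) * (x j : ℂ) := by
          push_cast
          rfl
        rw [hGdef]
        show cexp (-(((‖x - x₀‖ ^ 2 / (2 * κ ^ 2) : ℝ)) : ℂ)) * (⇑h) x = _
        rw [hArg x, Complex.exp_add, Complex.exp_add, hcoe, hgfun]
        ring
      have hG0 := horth x₀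
      rw [integral_congr_ae (Eventually.of_forall hsplit), integral_const_mul] at hG0
      exact (mul_eq_zero.mp hG0).resolve_left (Complex.exp_ne_zero _)
    have hphi := phi_zero_of_real hgm hgc h0
    have hgz := ae_zero_of_phi hgm hgc hphi
    have hhz : (⇑h) =ᵐ[(volume : Measure (EuclideanSpace ℝ (Fin n)))] 0 := by
      filter_upwards [hgz] with x hx
      rw [hgfun] at hx
      have := mul_eq_zero.mp hx
      exact this.resolve_right (Complex.exp_ne_zero _)
    exact (MeasureTheory.Lp.eq_zero_iff_ae_eq_zero).mpr hhz
  -- use density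
  have hcl : hf.toLp f ∈ closure (S : Set (Lp ℂ 2 (volume : Measure (EuclideanSpace ℝ (Fin n))))) := by
    have hmemtop : hf.toLp f ∈ S.topologicalClosure := by
      rw [hdense]; exact Submodule.mem_top
    exact hmemtop
  obtain ⟨s, hsS, hdist⟩ := Metric.mem_closure_iff.mp hcl ε hε
  obtain ⟨m, cc, vv, hsum⟩ := Submodule.mem_span_set'.mp hsS
  have hx' : ∀ i, ∃ x₀, (hGmem x₀).toLp (G x₀) = (vv i : Lp ℂ 2 (volume : Measure (EuclideanSpace ℝ (Fin n)))) :=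
    fun i => (vv i).2
  choose xs hxs using hx'
  have hscoe : ⇑s =ᵐ[(volume : Measure (EuclideanSpace ℝ (Fin n)))]
      fun y => ∑ i, cc i * G (xs i) y := by
    have hsum2 : (∑ i, cc i • (hGmem (xs i)).toLp (G (xs i))) = s := by
      rw [← hsum]
      exact Finset.sum_congr rfl fun i _ => by rw [hxs i]
    rw [← hsum2]
    exact coeFn_sum_smul_toLp cc (fun i => G (xs i)) (fun i => hGmem (xs i)) Finset.univ
  refine ⟨m + 1, by omega, Fin.cons 0 xs, Fin.cons 0 cc, ?_⟩
  have hfuneq : (fun y : EuclideanSpace ℝ (Fin n) =>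
      f y - ∑ j : Fin (m + 1), (Fin.cons 0 cc : Fin (m+1) → ℂ) j *
        Complex.exp (-(((‖y - (Fin.cons 0 xs : Fin (m+1) → EuclideanSpace ℝ (Fin n)) j‖ ^ 2 /
          (2 * κ ^ 2) : ℝ)) : ℂ)))
      =ᵐ[(volume : Measure (EuclideanSpace ℝ (Fin n)))] ⇑(hf.toLp f - s) := by
    filter_upwards [MeasureTheory.Lp.coeFn_sub (hf.toLp f) s, hf.coeFn_toLp, hscoe]
      with y h1 h2 h3
    rw [h1, Pi.sub_apply, h2, h3]
    congr 1
    rw [Fin.sum_univ_succ]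
    simp only [Fin.cons_zero, Fin.cons_succ, zero_mul, zero_add]
    rfl
  rw [eLpNorm_congr_ae hfuneq]
  have hne : eLpNorm (⇑(hf.toLp f - s)) 2 (volume : Measure (EuclideanSpace ℝ (Fin n))) ≠ ⊤ :=
    MeasureTheory.Lp.eLpNorm_ne_top _
  rw [ENNReal.lt_ofReal_iff_toReal_lt hne]
  have hnorm : ‖hf.toLp f - s‖ =
      (eLpNorm (⇑(hf.toLp f - s)) 2 (volume : Measure (EuclideanSpace ℝ (Fin n)))).toReal :=
    MeasureTheory.Lp.norm_def _
  rw [← hnorm]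
  rw [← dist_eq_norm]
  exact hdist
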